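/- Suppose that for every u ∈ ℝⁿ the limit C_i(u) := lim_{t→∞} f_i(t H_i u)/t exists and is finite, and define h_i(u,v,t) := (f_i(v + t H_i u) − f_i(v))/t for t > 0. Then on every compact subset K ⊆ ℝⁿ × ℝ^{m_i}, the convergence h_i(u,v,t) → C_i(u) as t → ∞ is uniform in (u,v) ∈ K: for every δ > 0 there is an N such that for all t ≥ N and all (u,v) ∈ K, |h_i(u,v,t) − C_i(u)| ≤ δ. -/

import Mathlib

/-- Lemma 2 (ii), uniform convergence part: the convergence of
`h (u, v, t) = (f (v + t • H u) - f v) / t` to `C u` is uniform in `(u, v)`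
on every compact subset of `ℝⁿ × ℝ^{mi}`. -/
theorem h_tendstoUniformly_C_on_compact (n mi : ℕ)
    (H : Matrix (Fin mi) (Fin n) ℝ) (f : (Fin mi → ℝ) → ℝ)
    (hconv : ConvexOn ℝ Set.univ f)
    (hsym : ∀ u, f u = f (-u))
    (hnonneg : ∀ u, 0 ≤ f u)
    (hzero : f 0 = 0)
    (C : EuclideanSpace ℝ (Fin n) → ℝ)
    (hC : ∀ u : EuclideanSpace ℝ (Fin n),
      Filter.Tendsto (fun t : ℝ => f (t • H.mulVec u) / t) Filter.atTop (nhds (C u))) :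
    ∀ K : Set (EuclideanSpace ℝ (Fin n) × (Fin mi → ℝ)), IsCompact K →
      ∀ δ : ℝ, 0 < δ → ∃ N : ℝ, ∀ t : ℝ, N ≤ t → ∀ uv ∈ K,
        |(f (uv.2 + t • H.mulVec uv.1) - f uv.2) / t - C uv.1| ≤ δ := by
  classical
  -- monotonicity of the difference quotient in `t`
  have hmono : ∀ (v w : Fin mi → ℝ) {s t : ℝ}, 0 < s → s ≤ t →
      (f (v + s • w) - f v) / s ≤ (f (v + t • w) - f v) / t := by
    intro v w s t hs hst
    have hg : ConvexOn ℝ Set.univ (fun r : ℝ => f (v + r • w)) := by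
      have h1 := hconv.comp_affineMap (AffineMap.lineMap (v : Fin mi → ℝ) (v + w))
      have h2 : (f ∘ (AffineMap.lineMap (v : Fin mi → ℝ) (v + w)))
          = fun r : ℝ => f (v + r • w) := by
        funext r
        simp [AffineMap.lineMap_apply, add_sub_cancel_left, add_comm]
      rw [Set.preimage_univ, h2] at h1
      exact h1
    have := hg.secant_mono (a := 0) (Set.mem_univ _) (Set.mem_univ _) (Set.mem_univ _)
      (ne_of_gt hs) (ne_of_gt (hs.trans_le hst)) hst
    simpa [hzero] using this
  -- upper bound: the difference quotient is at most `C u`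
  have hupper : ∀ (u : EuclideanSpace ℝ (Fin n)) (v : Fin mi → ℝ) (t : ℝ), 0 < t →
      (f (v + t • H.mulVec u) - f v) / t ≤ C u := by
    intro u v t ht
    have hbnd : ∀ T : ℝ, t ≤ T →
        (f (v + t • H.mulVec u) - f v) / t
          ≤ f ((2:ℝ) • v) / (2 * T) + f ((2 * T) • H.mulVec u) / (2 * T) - f v / T := by
      intro T hT
      have hT0 : 0 < T := ht.trans_le hT
      have h1 := hmono v (H.mulVec u) ht hT
      have h2 : f (v + T • H.mulVec u)
          ≤ (1/2 : ℝ) * f ((2:ℝ) • v) + (1/2 : ℝ) * f ((2*T) • H.mulVec u) := by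
        have h3 := hconv.2 (Set.mem_univ ((2:ℝ) • v)) (Set.mem_univ ((2*T) • H.mulVec u))
          (by norm_num : (0:ℝ) ≤ 1/2) (by norm_num : (0:ℝ) ≤ 1/2) (by norm_num)
        have heq : (1/2 : ℝ) • ((2:ℝ) • v) + (1/2 : ℝ) • ((2*T) • H.mulVec u)
            = v + T • H.mulVec u := by
          module
        rw [heq] at h3
        simpa [smul_eq_mul] using h3
      calc (f (v + t • H.mulVec u) - f v) / t
          ≤ (f (v + T • H.mulVec u) - f v) / T := h1
        _ ≤ ((1/2:ℝ) * f ((2:ℝ) • v) + (1/2:ℝ) * f ((2*T) • H.mulVec u) - f v) / T := by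
            gcongr
        _ = f ((2:ℝ) • v) / (2*T) + f ((2*T) • H.mulVec u) / (2*T) - f v / T := by
            field_simp
    have h2T : Filter.Tendsto (fun T : ℝ => 2 * T) Filter.atTop Filter.atTop :=
      Filter.Tendsto.const_mul_atTop two_pos Filter.tendsto_id
    have htend : Filter.Tendsto
        (fun T : ℝ => f ((2:ℝ) • v) / (2 * T) + f ((2 * T) • H.mulVec u) / (2 * T) - f v / T)
        Filter.atTop (nhds (0 + C u - 0)) := by
      refine Filter.Tendsto.sub (Filter.Tendsto.add ?_ ?_) ?_
      · exact Filter.Tendsto.div_atTop tendsto_const_nhds h2T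
      · exact (hC u).comp h2T
      · exact Filter.Tendsto.div_atTop tendsto_const_nhds Filter.tendsto_id
    rw [zero_add, sub_zero] at htend
    exact ge_of_tendsto htend (Filter.eventually_atTop.2 ⟨t, hbnd⟩)
  -- pointwise convergence of the difference quotient to `C u`
  have hpt : ∀ (u : EuclideanSpace ℝ (Fin n)) (v : Fin mi → ℝ),
      Filter.Tendsto (fun t : ℝ => (f (v + t • H.mulVec u) - f v) / t)
        Filter.atTop (nhds (C u)) := by
    intro u v
    have hhalf : Filter.Tendsto (fun t : ℝ => t / 2) Filter.atTop Filter.atTop :=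
      Filter.tendsto_id.atTop_div_const two_pos
    have hlowtend : Filter.Tendsto
        (fun t : ℝ => f ((t / 2) • H.mulVec u) / (t / 2) - 2 * f v / t)
        Filter.atTop (nhds (C u - 0)) :=
      Filter.Tendsto.sub ((hC u).comp hhalf)
        (Filter.Tendsto.div_atTop tendsto_const_nhds Filter.tendsto_id)
    rw [sub_zero] at hlowtend
    refine tendsto_of_tendsto_of_tendsto_of_le_of_le' hlowtend tendsto_const_nhds ?_ ?_
    · -- lower bound eventually
      filter_upwards [Filter.eventually_gt_atTop (0:ℝ)] with t ht
      have h3 := hconv.2 (Set.mem_univ (-v)) (Set.mem_univ (v + t • H.mulVec u))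
        (by norm_num : (0:ℝ) ≤ 1/2) (by norm_num : (0:ℝ) ≤ 1/2) (by norm_num)
      have heq : (1/2 : ℝ) • (-v) + (1/2 : ℝ) • (v + t • H.mulVec u)
          = (t / 2) • H.mulVec u := by module
      rw [heq] at h3
      have hs : f (-v) = f v := (hsym v).symm
      rw [hs, smul_eq_mul, smul_eq_mul] at h3
      have ht' : t ≠ 0 := ne_of_gt ht
      calc f ((t / 2) • H.mulVec u) / (t / 2) - 2 * f v / t
          = (2 * f ((t / 2) • H.mulVec u) - 2 * f v) / t := by field_simp
        _ ≤ (f (v + t • H.mulVec u) - f v) / t := div_le_div_of_nonneg_right (by linarith) (le_of_lt ht)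
    · filter_upwards [Filter.eventually_gt_atTop (0:ℝ)] with t ht
      exact hupper u v t ht
  -- continuity of `f`
  have fcont : Continuous f := hconv.locallyLipschitz.continuous
  -- continuity of `u ↦ H.mulVec u`
  have hxcont : Continuous (fun u : EuclideanSpace ℝ (Fin n) => H.mulVec u) := by
    let L : EuclideanSpace ℝ (Fin n) →ₗ[ℝ] (Fin mi → ℝ) :=
      { toFun := fun u => H.mulVec u
        map_add' := fun a b => H.mulVec_add a b
        map_smul' := fun c a => H.mulVec_smul c a }
    exact L.continuous_of_finiteDimensional
  -- `C` is convex, hence continuous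
  have hCconv : ConvexOn ℝ Set.univ C := by
    refine ⟨convex_univ, fun u _ w _ a b ha hb hab => ?_⟩
    have hineq : ∀ᶠ t : ℝ in Filter.atTop,
        f (t • H.mulVec (a • u + b • w)) / t
          ≤ a * (f (t • H.mulVec u) / t) + b * (f (t • H.mulVec w) / t) := by
      filter_upwards [Filter.eventually_gt_atTop (0:ℝ)] with t ht
      have hmv : H.mulVec (a • u + b • w) = a • H.mulVec u + b • H.mulVec w := by
        rw [Matrix.mulVec_add, Matrix.mulVec_smul, Matrix.mulVec_smul]
      have heq : t • (a • H.mulVec u + b • H.mulVec w)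
          = a • (t • H.mulVec u) + b • (t • H.mulVec w) := by module
      have h3 := hconv.2 (Set.mem_univ (t • H.mulVec u)) (Set.mem_univ (t • H.mulVec w)) ha hb hab
      rw [hmv, heq]
      calc f (a • (t • H.mulVec u) + b • (t • H.mulVec w)) / t
          ≤ (a * f (t • H.mulVec u) + b * f (t • H.mulVec w)) / t :=
            div_le_div_of_nonneg_right (by simpa [smul_eq_mul] using h3) (le_of_lt ht)
        _ = a * (f (t • H.mulVec u) / t) + b * (f (t • H.mulVec w) / t) := by ring
    have := le_of_tendsto_of_tendsto (hC (a • u + b • w))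
      (((hC u).const_mul a).add ((hC w).const_mul b)) hineq
    simpa [smul_eq_mul] using this
  have Ccont : Continuous C := hCconv.locallyLipschitz.continuous
  -- the compactness (Dini-type) argument
  intro K hK δ hδ
  set U : ℕ → Set (EuclideanSpace ℝ (Fin n) × (Fin mi → ℝ)) := fun k =>
    {uv | C uv.1 - (f (uv.2 + ((k:ℝ)+1) • H.mulVec uv.1) - f uv.2) / ((k:ℝ)+1) < δ} with hUdef
  have hopen : ∀ k, IsOpen (U k) := by
    intro k
    have hc : Continuous (fun uv : EuclideanSpace ℝ (Fin n) × (Fin mi → ℝ) =>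
        C uv.1 - (f (uv.2 + ((k:ℝ)+1) • H.mulVec uv.1) - f uv.2) / ((k:ℝ)+1)) := by
      refine (Ccont.comp continuous_fst).sub (Continuous.div_const ?_ _)
      exact (fcont.comp (continuous_snd.add
        ((hxcont.comp continuous_fst).const_smul ((k:ℝ)+1)))).sub (fcont.comp continuous_snd)
    exact isOpen_lt hc continuous_const
  have hUmono : ∀ j k : ℕ, j ≤ k → U j ⊆ U k := by
    intro j k hjk uv huv
    simp only [hUdef, Set.mem_setOf_eq] at huv ⊢
    have h1 : ((j:ℝ)+1) ≤ (k:ℝ)+1 := by exact_mod_cast add_le_add_left (Nat.cast_le.2 hjk) 1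
    have := hmono uv.2 (H.mulVec uv.1) (by positivity : (0:ℝ) < (j:ℝ)+1) h1
    linarith
  have hcover : K ⊆ ⋃ k, U k := by
    intro uv _
    have hev : ∀ᶠ t : ℝ in Filter.atTop,
        C uv.1 - δ < (f (uv.2 + t • H.mulVec uv.1) - f uv.2) / t :=
      (hpt uv.1 uv.2).eventually (eventually_gt_nhds (by linarith))
    obtain ⟨t₀, ht₀⟩ := Filter.eventually_atTop.1 hev
    obtain ⟨k, hk⟩ := exists_nat_ge t₀
    refine Set.mem_iUnion.2 ⟨k, ?_⟩
    simp only [hUdef, Set.mem_setOf_eq]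
    have := ht₀ ((k:ℝ)+1) (by linarith)
    linarith
  obtain ⟨s, hs⟩ := hK.elim_finite_subcover U hopen hcover
  set M : ℕ := s.sup id with hM
  have hKM : K ⊆ U M := by
    intro uv huv
    obtain ⟨k, hks, hkm⟩ := Set.mem_iUnion₂.1 (hs huv)
    exact hUmono k M (Finset.le_sup (f := id) hks) hkm
  refine ⟨(M:ℝ)+1, fun t ht uv huv => ?_⟩
  have hM1 : (0:ℝ) < (M:ℝ)+1 := by positivity
  have ht0 : (0:ℝ) < t := lt_of_lt_of_le hM1 ht
  have h1 : C uv.1 - (f (uv.2 + ((M:ℝ)+1) • H.mulVec uv.1) - f uv.2) / ((M:ℝ)+1) < δ := hKM huv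
  have h2 : (f (uv.2 + ((M:ℝ)+1) • H.mulVec uv.1) - f uv.2) / ((M:ℝ)+1)
      ≤ (f (uv.2 + t • H.mulVec uv.1) - f uv.2) / t := hmono uv.2 (H.mulVec uv.1) hM1 ht
  have h3 : (f (uv.2 + t • H.mulVec uv.1) - f uv.2) / t ≤ C uv.1 := hupper uv.1 uv.2 t ht0
  rw [abs_le]
  constructor <;> linarith
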